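/- Let g = [[a,b],[c,d]] be a square matrix of size m+n, h = [[p,q],[r,t]] of size m+N, and f = [[e,φ],[ψ,ω]] of size m+L, over k. Form (g∘h)∘f by regarding g∘h as a 2×2 block matrix with respect to the splitting m + (n+N), and form g∘(h∘f) by regarding h∘f as a 2×2 block matrix with respect to the splitting m + (N+L). Then, under the canonical identification of the index sets (both products being square matrices of size m+n+N+L with row and column blocks (m,n,N,L)), (g∘h)∘f = g∘(h∘f); explicitly, both sides equal the 4×4 block matrix [[a·p·e, b, a·q, a·p·φ],[c·p·e, d, c·q, c·p·φ],[r·e, 0, t, r·φ],[ψ, 0, 0, ω]]. -/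

import Mathlib

namespace Neretin

open Matrix

/-- The `∘`-product of two block matrices `g = [[a,b],[c,d]]` (size `m + n`) and
`h = [[p,q],[r,t]]` (size `m + N`): the square matrix of size `m + n + N` whose 3×3
block form is `[[a·p, b, a·q], [c·p, d, c·q], [r, 0, t]]`. -/
def circ {k : Type*} [Field k] {m n N : Type*} [Fintype m]
    (a : Matrix m m k) (b : Matrix m n k) (c : Matrix n m k) (d : Matrix n n k)
    (p : Matrix m m k) (q : Matrix m N k) (r : Matrix N m k) (t : Matrix N N k) :
    Matrix (m ⊕ n ⊕ N) (m ⊕ n ⊕ N) k :=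
  Matrix.fromBlocks (a * p) (Matrix.fromCols b (a * q))
    (Matrix.fromRows (c * p) r) (Matrix.fromBlocks d (c * q) 0 t)

/-- **associativity of the `∘`-product.** Under the canonical
identification of the index sets, `(g∘h)∘f = g∘(h∘f)`, and both sides equal the explicit
4×4 block matrix `[[a·p·e, b, a·q, a·p·φ], [c·p·e, d, c·q, c·p·φ], [r·e, 0, t, r·φ],
[ψ, 0, 0, ω]]`. -/
theorem circ_assoc (k : Type*) [Field k] (m n N L : ℕ)
    (a : Matrix (Fin m) (Fin m) k) (b : Matrix (Fin m) (Fin n) k)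
    (c : Matrix (Fin n) (Fin m) k) (d : Matrix (Fin n) (Fin n) k)
    (p : Matrix (Fin m) (Fin m) k) (q : Matrix (Fin m) (Fin N) k)
    (r : Matrix (Fin N) (Fin m) k) (t : Matrix (Fin N) (Fin N) k)
    (e : Matrix (Fin m) (Fin m) k) (φ : Matrix (Fin m) (Fin L) k)
    (ψ : Matrix (Fin L) (Fin m) k) (ω : Matrix (Fin L) (Fin L) k) :
    Matrix.reindex
        (Equiv.sumCongr (Equiv.refl (Fin m)) (Equiv.sumAssoc (Fin n) (Fin N) (Fin L)))
        (Equiv.sumCongr (Equiv.refl (Fin m)) (Equiv.sumAssoc (Fin n) (Fin N) (Fin L)))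
        (circ (a * p) (Matrix.fromCols b (a * q)) (Matrix.fromRows (c * p) r)
          (Matrix.fromBlocks d (c * q) 0 t) e φ ψ ω)
      = Matrix.fromBlocks (a * p * e)
          (Matrix.fromCols b (Matrix.fromCols (a * q) (a * p * φ)))
          (Matrix.fromRows (c * p * e) (Matrix.fromRows (r * e) ψ))
          (Matrix.fromBlocks d (Matrix.fromCols (c * q) (c * p * φ)) 0
            (Matrix.fromBlocks t (r * φ) 0 ω)) ∧
    circ a b c d (p * e) (Matrix.fromCols q (p * φ)) (Matrix.fromRows (r * e) ψ)
        (Matrix.fromBlocks t (r * φ) 0 ω)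
      = Matrix.fromBlocks (a * p * e)
          (Matrix.fromCols b (Matrix.fromCols (a * q) (a * p * φ)))
          (Matrix.fromRows (c * p * e) (Matrix.fromRows (r * e) ψ))
          (Matrix.fromBlocks d (Matrix.fromCols (c * q) (c * p * φ)) 0
            (Matrix.fromBlocks t (r * φ) 0 ω)) := by
  constructor <;>
  · ext i j
    rcases i with i | i | i | i <;> rcases j with j | j | j | j <;>
      simp [circ, Matrix.fromBlocks, Matrix.fromCols, Matrix.fromRows_apply_inl, Matrix.fromRows_apply_inr,
        Matrix.mul_apply, Finset.mul_sum, Finset.sum_mul, mul_assoc, Matrix.of_apply, Sum.elim_inl, Sum.elim_inr] <;>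
      exact Finset.sum_comm

end Neretin
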